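/- arXiv:1904.01511 — 2 statements merged into one kernel-verified Lean document; each statement's English description precedes it below -/
import Mathlib

section
/- Let k ≥ 2 and let Δ ⊂ ℝ^k be a full-dimensional lattice polytope. Let v ∈ ℤ^k be a primitive vector with lw(Δ) = lw_v(Δ) =: m, and suppose: (1) the hyperplane {⟨x,v⟩ = min(Δ,v)} intersects Δ exactly in one vertex p_min, and the hyperplane {⟨x,v⟩ = max(Δ,v)} intersects Δ exactly in one vertex p_max; (2) the affine span Λ of the set of lattice points of Δ lying on the hyperplane {⟨x,v⟩ = min(Δ,v)+1} has dimension ≤ k−2; (3) the line through p_min and p_max does not intersect Λ. Then there exists a polynomial F ∈ ℚ[x₁,…,x_k] of total degree m whose degree-m homogeneous component equals (⟨x,v⟩)^m = (v₁x₁+⋯+v_kx_k)^m and which vanishes at every point of Δ ∩ ℤ^k. -/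
open MvPolynomial

/-- The canonical embedding of `ℤ^k` into `ℝ^k`. -/
def castR {k : ℕ} (p : Fin k → ℤ) : Fin k → ℝ := fun i => (p i : ℝ)

/-- `min(Δ,v) = min_{x ∈ Δ} ⟨x,v⟩`. -/
noncomputable def minv (k : ℕ) (Δ : Set (Fin k → ℝ)) (v : Fin k → ℤ) : ℝ :=
  sInf ((fun x : Fin k → ℝ => ∑ i, x i * (v i : ℝ)) '' Δ)

/-- `max(Δ,v) = max_{x ∈ Δ} ⟨x,v⟩`. -/
noncomputable def maxv (k : ℕ) (Δ : Set (Fin k → ℝ)) (v : Fin k → ℤ) : ℝ :=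
  sSup ((fun x : Fin k → ℝ => ∑ i, x i * (v i : ℝ)) '' Δ)

/-- The lattice width of `Δ` in the direction `v`. -/
noncomputable def lwv (k : ℕ) (Δ : Set (Fin k → ℝ)) (v : Fin k → ℤ) : ℝ :=
  maxv k Δ v - minv k Δ v

/-- The lattice width of `Δ`: the minimum of `lw_v(Δ)` over nonzero `v ∈ ℤ^k`. -/
noncomputable def lw (k : ℕ) (Δ : Set (Fin k → ℝ)) : ℝ :=
  sInf {w : ℝ | ∃ v : Fin k → ℤ, v ≠ 0 ∧ w = lwv k Δ v}

/-- `Λ`: the affine span of the lattice points of `Δ` lying on the hyperplane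
`⟨x,v⟩ = min(Δ,v) + 1`. -/
noncomputable def Lambda (k : ℕ) (Δ : Set (Fin k → ℝ)) (v : Fin k → ℤ) :
    AffineSubspace ℝ (Fin k → ℝ) :=
  affineSpan ℝ (castR '' {p : Fin k → ℤ |
    castR p ∈ Δ ∧ ∑ i, (p i : ℝ) * (v i : ℝ) = minv k Δ v + 1})

/- ### Auxiliary definitions and lemmas -/

/-- The canonical embedding of `ℤ^k` into `ℚ^k`. -/
def castQ' {k : ℕ} (p : Fin k → ℤ) : Fin k → ℚ := fun i => (p i : ℚ)

/-- The canonical embedding of `ℚ^k` into `ℝ^k`. -/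
def castQR' {k : ℕ} (x : Fin k → ℚ) : Fin k → ℝ := fun i => (x i : ℝ)

lemma castQR'_castQ' {k : ℕ} (p : Fin k → ℤ) : castQR' (castQ' p) = castR p := by
  funext i; simp [castQR', castQ', castR]

lemma castR_injective {k : ℕ} : Function.Injective (castR (k := k)) := by
  intro p q h
  funext i
  have : (p i : ℝ) = (q i : ℝ) := congrFun h i
  exact_mod_cast this

lemma castQR'_mem_affineSpan {k : ℕ} {s : Set (Fin k → ℚ)} {x : Fin k → ℚ}
    (h : x ∈ affineSpan ℚ s) : castQR' x ∈ affineSpan ℝ (castQR' '' s) := by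
  refine affineSpan_induction (p := fun y => castQR' y ∈ affineSpan ℝ (castQR' '' s)) h
    (fun y hy => subset_affineSpan ℝ _ (Set.mem_image_of_mem _ hy))
    (fun c u w z hu hw hz => ?_)
  have heq : castQR' (c • (u -ᵥ w) +ᵥ z) = (c : ℝ) • (castQR' u -ᵥ castQR' w) +ᵥ castQR' z := by
    funext i
    show ((c • (u - w) + z) i : ℝ) = (c:ℝ) * ((castQR' u - castQR' w) i) + castQR' z i
    simp only [castQR', Pi.add_apply, Pi.smul_apply, Pi.sub_apply, smul_eq_mul]
    push_cast
    ring
  show castQR' (c • (u -ᵥ w) +ᵥ z) ∈ affineSpan ℝ (castQR' '' s)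
  rw [heq]
  exact AffineSubspace.smul_vsub_vadd_mem _ _ hu hw hz

lemma homComp_of_isHomogeneous {σ R : Type*} [CommSemiring R] {p : MvPolynomial σ R} {d n : ℕ}
    (h : p.IsHomogeneous d) : homogeneousComponent n p = if n = d then p else 0 := by
  split_ifs with hnd
  · subst hnd
    ext e
    rw [coeff_homogeneousComponent]
    split_ifs with he
    · rfl
    · by_contra hc
      have := h (fun hh => hc hh.symm)
      apply he
      simpa [Finsupp.degree_apply, Finsupp.weight, Finsupp.linearCombination, Finsupp.sum] using this
  · apply homogeneousComponent_eq_zero'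
    intro e he
    have he' : coeff e p ≠ 0 := by simpa [mem_support_iff] using he
    have := h he'
    intro hc
    apply hnd
    rw [← hc]
    simpa [Finsupp.degree_apply, Finsupp.weight, Finsupp.linearCombination, Finsupp.sum] using this

lemma sum_homComp_range {σ R : Type*} [CommSemiring R] (p : MvPolynomial σ R) {N : ℕ}
    (h : p.totalDegree < N) : ∑ j ∈ Finset.range N, homogeneousComponent j p = p := by
  conv_rhs => rw [← sum_homogeneousComponent p]
  symm
  apply Finset.sum_subset (Finset.range_subset_range.2 h)
  intro j _ hj
  refine homogeneousComponent_eq_zero j p ?_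
  have hj' : ¬ j < p.totalDegree + 1 := by simpa [Finset.mem_range] using hj
  omega

lemma prod_affine_totalDegree_le {ι σ R : Type*} [CommRing R] (s : Finset ι)
    (L : ι → MvPolynomial σ R) (c : ι → R) (hL : ∀ i ∈ s, (L i).IsHomogeneous 1) :
    (∏ i ∈ s, (L i + C (c i))).totalDegree ≤ s.card := by
  refine le_trans (totalDegree_finset_prod s _) ?_
  have : ∀ i ∈ s, (L i + C (c i)).totalDegree ≤ 1 := by
    intro i hi
    refine le_trans (totalDegree_add _ _) (max_le ((hL i hi).totalDegree_le) ?_)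
    simp [totalDegree_C]
  have h2 : ∑ i ∈ s, (L i + C (c i)).totalDegree ≤ ∑ _i ∈ s, (1:ℕ) := Finset.sum_le_sum this
  simpa using h2

lemma homComp_prod_affine {ι σ R : Type*} [CommRing R] (s : Finset ι)
    (L : ι → MvPolynomial σ R) (c : ι → R) (hL : ∀ i ∈ s, (L i).IsHomogeneous 1) :
    homogeneousComponent s.card (∏ i ∈ s, (L i + C (c i))) = ∏ i ∈ s, L i := by
  induction s using Finset.cons_induction with
  | empty => simp [homogeneousComponent_zero]
  | cons a s ha ih =>
    have hLs : ∀ i ∈ s, (L i).IsHomogeneous 1 := fun i hi => hL i (Finset.mem_cons_of_mem hi)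
    have hLa : (L a).IsHomogeneous 1 := hL a (Finset.mem_cons_self a s)
    set P := ∏ i ∈ s, (L i + C (c i)) with hP
    set n := s.card with hn
    have hdegP : P.totalDegree ≤ n := prod_affine_totalDegree_le s L c hLs
    rw [Finset.prod_cons, Finset.prod_cons, Finset.card_cons]
    have expand : (L a + C (c a)) * P = L a * P + C (c a) * P := by ring
    rw [expand, map_add]
    have h2 : homogeneousComponent (n + 1) (C (c a) * P) = 0 := by
      apply homogeneousComponent_eq_zero
      calc (C (c a) * P).totalDegree ≤ (C (c a)).totalDegree + P.totalDegree := totalDegree_mul _ _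
        _ ≤ 0 + n := by simpa [totalDegree_C] using hdegP
        _ < n + 1 := by omega
    rw [h2, add_zero]
    have hPsum : P = ∑ j ∈ Finset.range (n + 1), homogeneousComponent j P :=
      (sum_homComp_range P (by omega)).symm
    conv_lhs => rw [hPsum]
    rw [Finset.mul_sum, map_sum]
    have key : ∀ j ∈ Finset.range (n + 1),
        homogeneousComponent (n + 1) (L a * homogeneousComponent j P) =
        if j = n then L a * homogeneousComponent j P else 0 := by
      intro j hj
      have hhom : (L a * homogeneousComponent j P).IsHomogeneous (1 + j) :=
        hLa.mul (homogeneousComponent_isHomogeneous j P)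
      rw [homComp_of_isHomogeneous hhom]
      congr 1
      simp only [eq_iff_iff]
      omega
    rw [Finset.sum_congr rfl key, Finset.sum_ite_eq' (Finset.range (n+1)) n
      (fun j => L a * homogeneousComponent j P)]
    simp [ih hLs]

lemma not_mem_span_insert_gen {k : ℕ} (f : (Fin k → ℝ) → ℝ) (hlin : IsLinearMap ℝ f)
    (gen : Set (Fin k → ℝ)) (n : ℝ) (m : ℕ) (hm2 : 2 ≤ m)
    (hgen : ∀ x ∈ gen, f x = n + 1)
    (pmin pmax : Fin k → ℝ) (hfmin : f pmin = n) (hfmax : f pmax = n + m)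
    (hline : (affineSpan ℝ {pmin, pmax} : Set (Fin k → ℝ)) ∩
      (affineSpan ℝ gen : Set (Fin k → ℝ)) = ∅) :
    pmin ∉ affineSpan ℝ (insert pmax gen) := by
  intro hmem
  rcases gen.eq_empty_or_nonempty with hge | ⟨a0, ha0⟩
  · rw [hge] at hmem
    have hins : (insert pmax (∅ : Set (Fin k → ℝ))) = {pmax} := by simp
    rw [hins] at hmem
    have : pmin = pmax := (AffineSubspace.mem_affineSpan_singleton _ _).mp hmem
    rw [this, hfmax] at hfmin
    have : (m : ℝ) = 0 := by linarith
    have : m = 0 := by exact_mod_cast this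
    omega
  · set Λ := affineSpan ℝ gen with hΛ
    have ha0Λ : a0 ∈ Λ := subset_affineSpan ℝ _ ha0
    have hΛlevel : ∀ x ∈ Λ, f x = n + 1 := by
      intro x hx
      set fl := hlin.mk' f with hfl
      have hsub : Λ ≤ AffineSubspace.mk' a0 (LinearMap.ker fl) := by
        rw [hΛ]
        apply affineSpan_le.mpr
        intro y hy
        rw [AffineSubspace.mem_coe, AffineSubspace.mem_mk', LinearMap.mem_ker]
        show fl (y - a0) = 0
        rw [map_sub]
        simp only [hfl, IsLinearMap.mk'_apply]
        rw [hgen y hy, hgen a0 ha0]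
        ring
      have := hsub hx
      rw [AffineSubspace.mem_mk', LinearMap.mem_ker] at this
      have h2 : fl (x - a0) = f x - f a0 := by rw [map_sub]; simp [hfl]
      have : f x - f a0 = 0 := by rw [← h2]; exact this
      rw [hgen a0 ha0] at this
      linarith
    have hmem' : pmin ∈ affineSpan ℝ (insert pmax (Λ : Set (Fin k → ℝ))) := by
      rw [affineSpan_insert_affineSpan]
      exact hmem
    rw [AffineSubspace.mem_affineSpan_insert_iff ha0Λ] at hmem'
    obtain ⟨r, z, hz, hrep⟩ := hmem'
    have hfrep : n = r * ((m : ℝ) - 1) + (n + 1) := by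
      have : f pmin = r * (f pmax - f a0) + f z := by
        rw [hrep]
        show f (r • (pmax - a0) + z) = _
        rw [hlin.map_add, hlin.map_smul, hlin.map_sub]
        simp
      rw [hfmin, hfmax, hgen a0 ha0, hΛlevel z hz] at this
      linarith
    have hr : r * ((m:ℝ) - 1) = -1 := by linarith
    have hm1 : (1:ℝ) ≤ (m:ℝ) - 1 := by
      have : (2:ℝ) ≤ m := by exact_mod_cast hm2
      linarith
    have hrne1 : r ≠ 1 := by
      intro h1
      rw [h1, one_mul] at hr
      linarith
    set s := (1 - r)⁻¹ with hs
    have hne : (1:ℝ) - r ≠ 0 := sub_ne_zero.mpr (fun h => hrne1 h.symm)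
    have hs1 : s * (1 - r) = 1 := by
      rw [hs]
      field_simp
    set y := s • (z - a0) + a0 with hy
    have hyΛ : y ∈ Λ := by
      have := Λ.smul_vsub_vadd_mem s hz ha0Λ ha0Λ
      exact this
    have hyline : y ∈ affineSpan ℝ {pmin, pmax} := by
      have h1 : pmin ∈ affineSpan ℝ ({pmin, pmax} : Set (Fin k → ℝ)) :=
        subset_affineSpan ℝ _ (by simp)
      have h2 : pmax ∈ affineSpan ℝ ({pmin, pmax} : Set (Fin k → ℝ)) :=
        subset_affineSpan ℝ _ (by simp)
      have hrep' : pmin = r • (pmax - a0) + z := hrep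
      have heq : y = (r * s) • (pmin - pmax) + pmin := by
        rw [hy, hrep']
        funext i
        simp only [Pi.add_apply, Pi.smul_apply, Pi.sub_apply, smul_eq_mul]
        linear_combination (z i - a0 i + r * (pmax i - a0 i)) * hs1
      rw [heq]
      exact (affineSpan ℝ {pmin, pmax}).smul_vsub_vadd_mem (r * s) h1 h2 h1
    have : y ∈ (affineSpan ℝ {pmin, pmax} : Set (Fin k → ℝ)) ∩ (Λ : Set (Fin k → ℝ)) :=
      ⟨hyline, hyΛ⟩
    rw [hline] at this
    exact this

lemma exists_affine_functional {k : ℕ} (W : AffineSubspace ℚ (Fin k → ℚ)) (b : Fin k → ℚ)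
    (hb : b ∈ W) (x : Fin k → ℚ) (hx : x ∉ W) (t : ℚ) :
    ∃ (φ : (Fin k → ℚ) →ₗ[ℚ] ℚ) (c : ℚ), (∀ y ∈ W, φ y + c = 0) ∧ φ x + c = t := by
  have hd : (x - b) ∉ W.direction := by
    intro h
    exact hx (by simpa using AffineSubspace.vadd_mem_of_mem_direction h hb)
  obtain ⟨f, hfd, hmap⟩ := W.direction.exists_dual_map_eq_bot_of_notMem hd inferInstance
  refine ⟨(t / f (x - b)) • f, -((t / f (x - b)) • f) b, fun y hy => ?_, ?_⟩
  · have hyb : y - b ∈ W.direction := AffineSubspace.vsub_mem_direction hy hb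
    have : f (y - b) = 0 := by
      have : f (y - b) ∈ W.direction.map f := Submodule.mem_map_of_mem hyb
      rwa [hmap, Submodule.mem_bot] at this
    have hfy : f y = f b := by
      have := map_sub f y b
      rw [this] at *
      linarith [map_sub f y b]
    simp [LinearMap.smul_apply, hfy]
  · have : ((t / f (x - b)) • f) x - ((t / f (x - b)) • f) b = t := by
      rw [← map_sub ((t / f (x - b)) • f) x b]
      simp only [LinearMap.smul_apply, smul_eq_mul]
      have hne : f x - f b ≠ 0 := by rw [map_sub] at hfd; exact hfd
      rw [map_sub]
      field_simp
    linarith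

lemma poly_construct {k : ℕ} (v : Fin k → ℤ) (hv0 : v ≠ 0) (m : ℕ) (hm2 : 2 ≤ m) (n : ℤ)
    (a : Fin k → ℚ) (c : ℚ)
    (S : Set (Fin k → ℤ))
    (qmin qmax : Fin k → ℤ)
    (hlev : ∀ p ∈ S, n ≤ ∑ i, p i * v i ∧ ∑ i, p i * v i ≤ n + m)
    (hq0 : ∀ p ∈ S, ∑ i, p i * v i = n → p = qmin)
    (hqm : ∀ p ∈ S, ∑ i, p i * v i = n + m → p = qmax)
    (hG1 : ∀ p ∈ S, ∑ i, p i * v i = n + 1 → (∑ i, (p i : ℚ) * a i) + c = 0)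
    (hGmax : (∑ i, (qmax i : ℚ) * a i) + c = 0)
    (hGmin : (∑ i, (qmin i : ℚ) * a i) + c = -(m : ℚ)) :
    ∃ F : MvPolynomial (Fin k) ℚ, F.totalDegree = m ∧
      homogeneousComponent m F = (∑ i, C (v i : ℚ) * X i) ^ m ∧
      ∀ p ∈ S, eval (fun i => (p i : ℚ)) F = 0 := by
  classical
  set w : MvPolynomial (Fin k) ℚ := ∑ i, C (v i : ℚ) * X i with hwdef
  set lG : MvPolynomial (Fin k) ℚ := ∑ i, C (a i) * X i with hlGdef
  have hw : w.IsHomogeneous 1 :=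
    IsHomogeneous.sum _ _ _ (fun i _ => isHomogeneous_C_mul_X _ _)
  have hlG : lG.IsHomogeneous 1 :=
    IsHomogeneous.sum _ _ _ (fun i _ => isHomogeneous_C_mul_X _ _)
  set LA : ℕ → MvPolynomial (Fin k) ℚ := fun j => if j = 1 then lG else w with hLA
  set ca : ℕ → ℚ := fun j => if j = 1 then c else -((n : ℚ) + j) with hca
  set LB : ℕ → MvPolynomial (Fin k) ℚ := fun j => if j = 0 then w - lG else w with hLB
  set cb : ℕ → ℚ := fun j => if j = 0 then -(n : ℚ) - c - m else -((n : ℚ) + j) with hcb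
  have hLAhom : ∀ j ∈ Finset.range m, (LA j).IsHomogeneous 1 := by
    intro j _; rw [hLA]; dsimp only; split_ifs <;> assumption
  have hLBhom : ∀ j ∈ Finset.range m, (LB j).IsHomogeneous 1 := by
    intro j _; rw [hLB]; dsimp only; split_ifs
    · exact hw.sub hlG
    · exact hw
  set F : MvPolynomial (Fin k) ℚ :=
    (∏ j ∈ Finset.range m, (LA j + C (ca j))) + (∏ j ∈ Finset.range m, (LB j + C (cb j)))
    with hF
  have h1mem : (1 : ℕ) ∈ Finset.range m := Finset.mem_range.mpr (by omega)
  have h0mem : (0 : ℕ) ∈ Finset.range m := Finset.mem_range.mpr (by omega)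
  have hprodA : ∏ j ∈ Finset.range m, LA j = lG * w ^ (m - 1) := by
    rw [← Finset.mul_prod_erase _ _ h1mem]
    have : ∀ j ∈ (Finset.range m).erase 1, LA j = w := by
      intro j hj
      have : j ≠ 1 := Finset.ne_of_mem_erase hj
      rw [hLA]; dsimp only; rw [if_neg this]
    rw [Finset.prod_congr rfl this, Finset.prod_const, Finset.card_erase_of_mem h1mem,
      Finset.card_range]
    rw [hLA]; dsimp only; rw [if_pos rfl]
  have hprodB : ∏ j ∈ Finset.range m, LB j = (w - lG) * w ^ (m - 1) := by
    rw [← Finset.mul_prod_erase _ _ h0mem]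
    have : ∀ j ∈ (Finset.range m).erase 0, LB j = w := by
      intro j hj
      have : j ≠ 0 := Finset.ne_of_mem_erase hj
      rw [hLB]; dsimp only; rw [if_neg this]
    rw [Finset.prod_congr rfl this, Finset.prod_const, Finset.card_erase_of_mem h0mem,
      Finset.card_range]
    rw [hLB]; dsimp only; rw [if_pos rfl]
  have hhc : homogeneousComponent m F = w ^ m := by
    rw [hF, map_add]
    have hA := homComp_prod_affine (Finset.range m) LA ca hLAhom
    have hB := homComp_prod_affine (Finset.range m) LB cb hLBhom
    rw [Finset.card_range] at hA hB
    rw [hA, hB, hprodA, hprodB]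
    have hm1 : m - 1 + 1 = m := by omega
    calc lG * w ^ (m-1) + (w - lG) * w ^ (m-1) = w ^ (m-1) * w := by ring
      _ = w ^ m := by rw [← pow_succ, hm1]
  obtain ⟨i0, hi0⟩ : ∃ i, v i ≠ 0 := by
    by_contra h; push_neg at h; exact hv0 (funext h)
  have hwm_ne : w ^ m ≠ 0 := by
    intro h
    have heval : eval (fun i => (v i : ℚ)) (w ^ m) = (∑ i, (v i : ℚ) ^ 2) ^ m := by
      rw [map_pow]
      congr 1
      rw [hwdef, map_sum]
      refine Finset.sum_congr rfl (fun i _ => ?_)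
      simp [sq]
    have hpos : (0 : ℚ) < ∑ i, (v i : ℚ) ^ 2 := by
      apply Finset.sum_pos' (fun i _ => sq_nonneg _)
      refine ⟨i0, Finset.mem_univ _, ?_⟩
      have : (v i0 : ℚ) ≠ 0 := Int.cast_ne_zero.mpr hi0
      positivity
    rw [h] at heval
    simp only [map_zero] at heval
    exact absurd heval.symm (ne_of_gt (pow_pos hpos m))
  have hdeg : F.totalDegree = m := by
    apply le_antisymm
    · rw [hF]
      refine le_trans (totalDegree_add _ _) (max_le ?_ ?_)
      · simpa [Finset.card_range] using prod_affine_totalDegree_le (Finset.range m) LA ca hLAhom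
      · simpa [Finset.card_range] using prod_affine_totalDegree_le (Finset.range m) LB cb hLBhom
    · by_contra hlt
      push_neg at hlt
      have := homogeneousComponent_eq_zero m F hlt
      rw [hhc] at this
      exact hwm_ne this
  refine ⟨F, hdeg, by rw [hhc, hwdef], ?_⟩
  intro p hp
  set ep : Fin k → ℚ := fun i => (p i : ℚ) with hep
  set L : ℤ := (∑ i, p i * v i) - n with hLdef
  obtain ⟨hL0, hLm⟩ := hlev p hp
  have hL0' : 0 ≤ L := by omega
  have hLm' : L ≤ m := by omega
  have hevalw : eval ep w = (n : ℚ) + (L : ℚ) := by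
    rw [hwdef, map_sum]
    have : ∀ i ∈ Finset.univ, eval ep (C (v i : ℚ) * X i) = (v i : ℚ) * (p i : ℚ) := by
      intro i _; simp [hep]
    rw [Finset.sum_congr rfl this]
    have : ((∑ i, p i * v i : ℤ) : ℚ) = ∑ i, (v i : ℚ) * (p i : ℚ) := by
      push_cast; exact Finset.sum_congr rfl (fun i _ => mul_comm _ _)
    rw [hLdef]; push_cast
    rw [← this]; push_cast; ring
  have hevallG : eval ep lG = ∑ i, (p i : ℚ) * a i := by
    rw [hlGdef, map_sum]
    refine Finset.sum_congr rfl (fun i _ => ?_)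
    simp [hep, mul_comm]
  rw [hF, map_add, map_prod, map_prod]
  have hA0 : ∏ j ∈ Finset.range m, eval ep (LA j + C (ca j)) = 0 := by
    by_cases hc1 : L = 1 ∨ L = m
    · apply Finset.prod_eq_zero h1mem
      rw [map_add, eval_C]
      rw [hLA, hca]; dsimp only; rw [if_pos rfl, if_pos rfl]
      rw [hevallG]
      rcases hc1 with h | h
      · exact hG1 p hp (by omega)
      · have hpq : p = qmax := hqm p hp (by omega)
        rw [hpq]; exact hGmax
    · push_neg at hc1
      obtain ⟨hne1, hnem⟩ := hc1
      set j0 : ℕ := L.toNat with hj0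
      have hj0L : (j0 : ℤ) = L := Int.toNat_of_nonneg hL0'
      have hj0mem : j0 ∈ Finset.range m := Finset.mem_range.mpr (by omega)
      have hj0ne1 : j0 ≠ 1 := by omega
      apply Finset.prod_eq_zero hj0mem
      rw [map_add, eval_C, hLA, hca]; dsimp only; rw [if_neg hj0ne1, if_neg hj0ne1]
      rw [hevalw]
      have : (j0 : ℚ) = (L : ℚ) := by exact_mod_cast hj0L
      rw [this]; ring
  have hB0 : ∏ j ∈ Finset.range m, eval ep (LB j + C (cb j)) = 0 := by
    by_cases hc0 : L = 0 ∨ L = m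
    · apply Finset.prod_eq_zero h0mem
      rw [map_add, eval_C, hLB, hcb]; dsimp only; rw [if_pos rfl, if_pos rfl]
      rw [map_sub, hevalw, hevallG]
      rcases hc0 with h | h
      · have hpq : p = qmin := hq0 p hp (by omega)
        rw [hpq] at *
        rw [h]
        push_cast
        linarith [hGmin]
      · have hpq : p = qmax := hqm p hp (by omega)
        rw [hpq] at *
        rw [h]
        push_cast
        linarith [hGmax]
    · push_neg at hc0
      obtain ⟨hne0, hnem⟩ := hc0
      set j0 : ℕ := L.toNat with hj0
      have hj0L : (j0 : ℤ) = L := Int.toNat_of_nonneg hL0'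
      have hj0mem : j0 ∈ Finset.range m := Finset.mem_range.mpr (by omega)
      have hj0ne0 : j0 ≠ 0 := by omega
      apply Finset.prod_eq_zero hj0mem
      rw [map_add, eval_C, hLB, hcb]; dsimp only; rw [if_neg hj0ne0, if_neg hj0ne0]
      rw [hevalw]
      have : (j0 : ℚ) = (L : ℚ) := by exact_mod_cast hj0L
      rw [this]; ring
  rw [hA0, hB0, add_zero]
/-- **Corollary (non-semiampleness criterion).** Under hypotheses (1)–(3) on the primitive
width direction `v`, all the lattice points of `Δ` lie on an affine hypersurface of degree
`m = lw(Δ)` with leading form `⟨x,v⟩^m`. -/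
theorem exists_hypersurface_of_width_conditions (k : ℕ) (hk : 2 ≤ k)
    (V : Finset (Fin k → ℤ)) (Δ : Set (Fin k → ℝ))
    (hΔ : Δ = convexHull ℝ (castR '' (V : Set (Fin k → ℤ))))
    (hfull : affineSpan ℝ Δ = ⊤)
    (v : Fin k → ℤ) (hprim : Finset.univ.gcd v = 1)
    (m : ℕ) (hm : (m : ℝ) = lwv k Δ v) (hlw : lw k Δ = lwv k Δ v)
    (pmin pmax : Fin k → ℝ)
    (hmin : {x ∈ Δ | ∑ i, x i * (v i : ℝ) = minv k Δ v} = {pmin})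
    (hmax : {x ∈ Δ | ∑ i, x i * (v i : ℝ) = maxv k Δ v} = {pmax})
    (hdim : Module.finrank ℝ (Lambda k Δ v).direction ≤ k - 2)
    (hline : (affineSpan ℝ {pmin, pmax} : Set (Fin k → ℝ)) ∩
      (Lambda k Δ v : Set (Fin k → ℝ)) = ∅) :
    ∃ F : MvPolynomial (Fin k) ℚ, F.totalDegree = m ∧
      MvPolynomial.homogeneousComponent m F =
        (∑ i, MvPolynomial.C (v i : ℚ) * MvPolynomial.X i) ^ m ∧
      ∀ p : Fin k → ℤ, castR p ∈ Δ →
        MvPolynomial.eval (fun i => (p i : ℚ)) F = 0 := by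
  classical
  -- ### setup
  set f : (Fin k → ℝ) → ℝ := fun x => ∑ i, x i * (v i : ℝ) with hf
  have hlin : IsLinearMap ℝ f := by
    constructor
    · intro x y; simp [hf, add_mul, Finset.sum_add_distrib]
    · intro c x; simp [hf, Finset.mul_sum, mul_assoc]
  have hv0 : v ≠ 0 := by
    intro h
    rw [h] at hprim
    have : Finset.univ.gcd (0 : Fin k → ℤ) = 0 := Finset.gcd_eq_zero_iff.mpr (fun i _ => rfl)
    rw [this] at hprim
    exact absurd hprim (by norm_num)
  have hΔne : Δ.Nonempty := by
    by_contra h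
    rw [Set.not_nonempty_iff_eq_empty] at h
    rw [h] at hfull
    have : (⊥ : AffineSubspace ℝ (Fin k → ℝ)) = ⊤ := by
      rw [← hfull, AffineSubspace.span_empty]
    exact (AffineSubspace.bot_ne_top ℝ (Fin k → ℝ) (Fin k → ℝ)) this
  have hVne : V.Nonempty := by
    by_contra h
    rw [Finset.not_nonempty_iff_eq_empty] at h
    rw [h] at hΔ
    simp [convexHull_empty] at hΔ
    exact hΔne.ne_empty hΔ
  set W : Finset ℤ := V.image (fun q => ∑ i, q i * v i) with hW
  have hWne : W.Nonempty := hVne.image _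
  set n : ℤ := W.min' hWne with hn
  set M : ℤ := W.max' hWne with hM
  have hlb : ∀ x ∈ Δ, (n : ℝ) ≤ f x := by
    intro x hx
    rw [hΔ] at hx
    have : convexHull ℝ (castR '' (V : Set (Fin k → ℤ))) ⊆ {y | (n:ℝ) ≤ f y} := by
      apply convexHull_min
      · rintro y ⟨q, hq, rfl⟩
        have h1 : n ≤ ∑ i, q i * v i := W.min'_le _ (Finset.mem_image_of_mem _ hq)
        have h2 : (n : ℝ) ≤ ∑ i, (q i : ℝ) * (v i : ℝ) := by exact_mod_cast h1
        simpa [hf, castR] using h2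
      · exact convex_halfSpace_ge hlin _
    exact this hx
  have hub : ∀ x ∈ Δ, f x ≤ (M : ℝ) := by
    intro x hx
    rw [hΔ] at hx
    have : convexHull ℝ (castR '' (V : Set (Fin k → ℤ))) ⊆ {y | f y ≤ (M:ℝ)} := by
      apply convexHull_min
      · rintro y ⟨q, hq, rfl⟩
        have h1 : ∑ i, q i * v i ≤ M := W.le_max' _ (Finset.mem_image_of_mem _ hq)
        have h2 : (∑ i, (q i : ℝ) * (v i : ℝ)) ≤ (M : ℝ) := by exact_mod_cast h1
        simpa [hf, castR] using h2
      · exact convex_halfSpace_le hlin _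
    exact this hx
  obtain ⟨qmin, hqminV, hqminval⟩ : ∃ q ∈ V, ∑ i, q i * v i = n := by
    obtain ⟨q, hq, hval⟩ := Finset.mem_image.mp (W.min'_mem hWne)
    exact ⟨q, hq, hval⟩
  obtain ⟨qmax, hqmaxV, hqmaxval⟩ : ∃ q ∈ V, ∑ i, q i * v i = M := by
    obtain ⟨q, hq, hval⟩ := Finset.mem_image.mp (W.max'_mem hWne)
    exact ⟨q, hq, hval⟩
  have hqminΔ : castR qmin ∈ Δ := by
    rw [hΔ]; exact subset_convexHull ℝ _ (Set.mem_image_of_mem _ hqminV)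
  have hqmaxΔ : castR qmax ∈ Δ := by
    rw [hΔ]; exact subset_convexHull ℝ _ (Set.mem_image_of_mem _ hqmaxV)
  have hcastf : ∀ p : Fin k → ℤ, f (castR p) = ((∑ i, p i * v i : ℤ) : ℝ) := by
    intro p
    simp only [hf, castR]
    push_cast
    ring_nf
  have hfqmin : f (castR qmin) = (n : ℝ) := by rw [hcastf, hqminval]
  have hfqmax : f (castR qmax) = (M : ℝ) := by rw [hcastf, hqmaxval]
  have hminv : minv k Δ v = (n : ℝ) := by
    apply le_antisymm
    · exact csInf_le ⟨(n:ℝ), by rintro y ⟨x, hx, rfl⟩; exact hlb x hx⟩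
        ⟨castR qmin, hqminΔ, hfqmin⟩
    · exact le_csInf (hΔne.image f) (by rintro y ⟨x, hx, rfl⟩; exact hlb x hx)
  have hmaxv : maxv k Δ v = (M : ℝ) := by
    apply le_antisymm
    · exact csSup_le (hΔne.image f) (by rintro y ⟨x, hx, rfl⟩; exact hub x hx)
    · exact le_csSup ⟨(M:ℝ), by rintro y ⟨x, hx, rfl⟩; exact hub x hx⟩
        ⟨castR qmax, hqmaxΔ, hfqmax⟩
  have hMn : M = n + m := by
    have : (M : ℝ) = (n : ℝ) + m := by
      rw [lwv, hminv, hmaxv] at hm; linarith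
    exact_mod_cast this
  -- pmin and pmax are lattice points
  have hpmin : pmin = castR qmin := by
    have : castR qmin ∈ {x ∈ Δ | ∑ i, x i * (v i : ℝ) = minv k Δ v} :=
      ⟨hqminΔ, by rw [hminv, ← hfqmin, hf]⟩
    rw [hmin] at this
    exact this.symm
  have hpmax : pmax = castR qmax := by
    have : castR qmax ∈ {x ∈ Δ | ∑ i, x i * (v i : ℝ) = maxv k Δ v} :=
      ⟨hqmaxΔ, by rw [hmaxv, ← hfqmax, hf]⟩
    rw [hmax] at this
    exact this.symm
  -- the generating set of Λ
  set gens : Set (Fin k → ℤ) := {p : Fin k → ℤ |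
    castR p ∈ Δ ∧ ∑ i, (p i : ℝ) * (v i : ℝ) = minv k Δ v + 1} with hgens
  have hLambda : Lambda k Δ v = affineSpan ℝ (castR '' gens) := rfl
  have hgenslevel : ∀ p ∈ gens, ∑ i, p i * v i = n + 1 := by
    intro p hp
    have h2 : f (castR p) = (n : ℝ) + 1 := by
      have := hp.2
      rw [hminv] at this
      simpa [hf, castR, mul_comm] using this
    rw [hcastf] at h2
    exact_mod_cast h2
  have hgenslevel' : ∀ p : Fin k → ℤ, castR p ∈ Δ → ∑ i, p i * v i = n + 1 → p ∈ gens := by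
    intro p hpΔ hlev
    refine ⟨hpΔ, ?_⟩
    rw [hminv]
    have : f (castR p) = ((n + 1 : ℤ) : ℝ) := by rw [hcastf, hlev]
    push_cast at this
    simpa [hf, castR, mul_comm] using this
  -- m ≠ 0
  have hm0 : m ≠ 0 := by
    intro h0
    rw [h0] at hMn
    simp at hMn
    set fl : (Fin k → ℝ) →ₗ[ℝ] ℝ := hlin.mk' f with hfl
    set s : AffineSubspace ℝ (Fin k → ℝ) := AffineSubspace.mk' (castR qmin) (LinearMap.ker fl)
      with hs
    have hΔs : Δ ⊆ (s : Set (Fin k → ℝ)) := by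
      intro x hx
      rw [hs, AffineSubspace.mem_coe, AffineSubspace.mem_mk', LinearMap.mem_ker]
      have h1 := hlb x hx
      have h2 := hub x hx
      rw [hMn] at h2
      have hfx : f x = (n : ℝ) := by linarith
      have heq : fl (x -ᵥ castR qmin) = f x - f (castR qmin) := by
        have : (x -ᵥ castR qmin) = x - castR qmin := rfl
        rw [this, map_sub]
        simp [hfl]
      rw [heq, hfx, hfqmin]
      ring
    have hs_top : (⊤ : AffineSubspace ℝ (Fin k → ℝ)) ≤ s := by
      rw [← hfull]
      exact affineSpan_le.mpr hΔs
    obtain ⟨i0, hi0⟩ : ∃ i, v i ≠ 0 := by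
      by_contra h
      push_neg at h
      exact hv0 (funext h)
    set y : Fin k → ℝ := castR qmin + Pi.single i0 1 with hy
    have hy_mem : y ∈ s := hs_top (AffineSubspace.mem_top _ _ _)
    rw [hs, AffineSubspace.mem_mk', LinearMap.mem_ker] at hy_mem
    have : (y -ᵥ castR qmin) = Pi.single i0 1 := by
      show y - castR qmin = _
      rw [hy]; abel
    rw [this] at hy_mem
    have : fl (Pi.single i0 1) = (v i0 : ℝ) := by
      simp [hfl, hf, IsLinearMap.mk'_apply]
      rw [Finset.sum_eq_single i0]
      · simp
      · intro b _ hb; simp [Pi.single_apply, hb]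
      · simp
    rw [this] at hy_mem
    exact hi0 (by exact_mod_cast hy_mem)
  -- m ≠ 1
  have hm1 : m ≠ 1 := by
    intro h1
    have hqmaxgens : qmax ∈ gens := by
      apply hgenslevel' qmax hqmaxΔ
      omega
    have hpmaxΛ : pmax ∈ Lambda k Δ v := by
      rw [hLambda, hpmax]
      exact subset_affineSpan ℝ _ (Set.mem_image_of_mem _ hqmaxgens)
    have hpmaxline : pmax ∈ affineSpan ℝ ({pmin, pmax} : Set (Fin k → ℝ)) :=
      subset_affineSpan ℝ _ (by simp)
    have : pmax ∈ (affineSpan ℝ {pmin, pmax} : Set (Fin k → ℝ)) ∩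
        (Lambda k Δ v : Set (Fin k → ℝ)) := ⟨hpmaxline, hpmaxΛ⟩
    rw [hline] at this
    exact this
  have hm2 : 2 ≤ m := by omega
  -- ### the ℚ-geometry
  set SQ : Set (Fin k → ℚ) := castQ' '' gens with hSQ
  set WQ : AffineSubspace ℚ (Fin k → ℚ) := affineSpan ℚ (insert (castQ' qmax) SQ) with hWQ
  have hqmaxWQ : castQ' qmax ∈ WQ := subset_affineSpan ℚ _ (Set.mem_insert _ _)
  have hqminWQ : castQ' qmin ∉ WQ := by
    intro hmem
    have hcast := castQR'_mem_affineSpan hmem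
    rw [castQR'_castQ'] at hcast
    have himg : castQR' '' (insert (castQ' qmax) SQ) = insert (castR qmax) (castR '' gens) := by
      rw [Set.image_insert_eq, castQR'_castQ', hSQ, ← Set.image_comp]
      exact congrArg (insert (castR qmax)) (Set.image_congr (fun p _ => castQR'_castQ' p))
    rw [himg] at hcast
    refine not_mem_span_insert_gen f hlin (castR '' gens) (n : ℝ) m hm2 ?_
      (castR qmin) (castR qmax) hfqmin (by rw [hfqmax, hMn]; push_cast; ring) ?_ hcast
    · rintro x ⟨p, hp, rfl⟩
      rw [hcastf, hgenslevel p hp]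
      push_cast; ring
    · rw [← hpmin, ← hpmax, ← hLambda]
      exact hline
  obtain ⟨φ, c, hφW, hφmin⟩ := exists_affine_functional WQ (castQ' qmax) hqmaxWQ
    (castQ' qmin) hqminWQ (-(m : ℚ))
  set a : Fin k → ℚ := fun i => φ (fun j => if i = j then 1 else 0) with ha
  have hφsum : ∀ y : Fin k → ℚ, φ y = ∑ i, y i * a i := by
    intro y
    rw [ha]
    simpa [smul_eq_mul] using LinearMap.pi_apply_eq_sum_univ φ y
  -- ### apply the polynomial construction
  have hq0 : ∀ p : Fin k → ℤ, castR p ∈ Δ → ∑ i, p i * v i = n → p = qmin := by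
    intro p hpΔ hlev
    apply castR_injective
    have : castR p ∈ {x ∈ Δ | ∑ i, x i * (v i : ℝ) = minv k Δ v} := by
      refine ⟨hpΔ, ?_⟩
      rw [hminv]
      have : f (castR p) = (n : ℝ) := by rw [hcastf, hlev]
      rw [hf] at this
      exact this
    rw [hmin] at this
    rw [this, hpmin]
  have hqm : ∀ p : Fin k → ℤ, castR p ∈ Δ → ∑ i, p i * v i = n + m → p = qmax := by
    intro p hpΔ hlev
    apply castR_injective
    have : castR p ∈ {x ∈ Δ | ∑ i, x i * (v i : ℝ) = maxv k Δ v} := by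
      refine ⟨hpΔ, ?_⟩
      rw [hmaxv, hMn]
      have : f (castR p) = ((n + m : ℤ) : ℝ) := by rw [hcastf, hlev]
      rw [hf] at this
      exact this
    rw [hmax] at this
    rw [this, hpmax]
  obtain ⟨F, hFdeg, hFhc, hFeval⟩ := poly_construct v hv0 m hm2 n a c
    {p : Fin k → ℤ | castR p ∈ Δ} qmin qmax
    (fun p hp => by
      have h1 := hlb (castR p) hp
      have h2 := hub (castR p) hp
      rw [hcastf] at h1 h2
      rw [hMn] at h2
      constructor
      · exact_mod_cast h1
      · exact_mod_cast h2)
    (fun p hp hl => hq0 p hp hl)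
    (fun p hp hl => hqm p hp hl)
    (fun p hp hl => by
      have hpg : p ∈ gens := hgenslevel' p hp hl
      have : castQ' p ∈ WQ := subset_affineSpan ℚ _ (Set.mem_insert_of_mem _
        (Set.mem_image_of_mem _ hpg))
      have := hφW _ this
      rwa [hφsum] at this)
    (by
      have := hφW _ hqmaxWQ
      rwa [hφsum] at this)
    (by rwa [hφsum] at hφmin)
  exact ⟨F, hFdeg, hFhc, fun p hp => hFeval p hp⟩
end

section
/- Let k ≥ 2 and let Δ ⊂ ℝ^k be a full-dimensional lattice polytope, and let v ∈ ℤ^k be a primitive vector with lw(Δ) = lw_v(Δ), satisfying: (1) the hyperplane {⟨x,v⟩ = min(Δ,v)} intersects Δ exactly in one vertex p_min, and the hyperplane {⟨x,v⟩ = max(Δ,v)} intersects Δ exactly in one vertex p_max; (2) the affine span Λ of the set of lattice points of Δ lying on {⟨x,v⟩ = min(Δ,v)+1} has dimension ≤ k−2; (3) the line through p_min and p_max does not intersect Λ. Then for every positive integer r the dilated polytope rΔ satisfies lw(rΔ) = lw_v(rΔ) = r·lw(Δ) and the same three conditions (1),(2),(3) hold for rΔ with respect to the same vector v. -/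
open MvPolynomial

/-- The dilation `rΔ = {r·x : x ∈ Δ}`. -/
def dil (k : ℕ) (r : ℕ) (Δ : Set (Fin k → ℝ)) : Set (Fin k → ℝ) :=
  (fun x : Fin k → ℝ => (r : ℝ) • x) '' Δ

noncomputable def flin (k : ℕ) (v : Fin k → ℤ) : (Fin k → ℝ) →ₗ[ℝ] ℝ where
  toFun x := ∑ i, x i * (v i : ℝ)
  map_add' x y := by simp [add_mul, Finset.sum_add_distrib]
  map_smul' c x := by simp [Finset.mul_sum, mul_assoc]

lemma flin_apply {k : ℕ} (v : Fin k → ℤ) (x : Fin k → ℝ) :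
    flin k v x = ∑ i, x i * (v i : ℝ) := rfl

lemma convexHull_finset_real (F : Finset ℝ) (hF : F.Nonempty) :
    convexHull ℝ (F : Set ℝ) = Set.Icc (F.min' hF) (F.max' hF) := by
  apply Set.Subset.antisymm
  · exact convexHull_min (fun x hx => ⟨F.min'_le x hx, F.le_max' x hx⟩) (convex_Icc _ _)
  · rw [← segment_eq_Icc (F.min'_le _ (F.max'_mem hF))]
    exact (convex_convexHull ℝ _).segment_subset
      (subset_convexHull _ _ (F.min'_mem hF)) (subset_convexHull _ _ (F.max'_mem hF))

lemma image_hull_eq_Icc {k : ℕ} (V : Finset (Fin k → ℤ)) (hV : V.Nonempty) (u : Fin k → ℤ) :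
    (fun x : Fin k → ℝ => ∑ i, x i * (u i : ℝ)) '' (convexHull ℝ (castR '' (V : Set (Fin k → ℤ)))) =
      Set.Icc ((V.image fun p => ∑ i, (p i : ℝ) * (u i : ℝ)).min' (hV.image _))
              ((V.image fun p => ∑ i, (p i : ℝ) * (u i : ℝ)).max' (hV.image _)) := by
  have h1 : (fun x : Fin k → ℝ => ∑ i, x i * (u i : ℝ)) '' (convexHull ℝ (castR '' (V : Set (Fin k → ℤ)))) =
      convexHull ℝ ((flin k u) '' (castR '' (V : Set (Fin k → ℤ)))) := (flin k u).image_convexHull _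
  have h2 : (flin k u) '' (castR '' (V : Set (Fin k → ℤ))) =
      ((V.image fun p => ∑ i, (p i : ℝ) * (u i : ℝ)) : Finset ℝ) := by
    ext y
    simp [flin_apply, castR, Set.image_image]
  rw [h1, h2, convexHull_finset_real _ (hV.image _)]

lemma dil_def {k r : ℕ} {Δ : Set (Fin k → ℝ)} : dil k r Δ = (fun x : Fin k → ℝ => (r : ℝ) • x) '' Δ := rfl

lemma slab_lemma {k : ℕ} (V : Finset (Fin k → ℤ)) (v : Fin k → ℤ) (m : ℤ) (pmin : Fin k → ℝ)
    (hpminV : pmin ∈ castR '' (V : Set (Fin k → ℤ)))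
    (hfpmin : ∑ i, pmin i * (v i : ℝ) = m)
    (hlb : ∀ p ∈ V, (m : ℝ) ≤ ∑ i, (p i : ℝ) * (v i : ℝ))
    (huniq : ∀ p ∈ V, (∑ i, (p i : ℝ) * (v i : ℝ)) = m → castR p = pmin)
    {t : ℝ} (ht0 : 0 < t)
    {x : Fin k → ℝ} (hx : x ∈ convexHull ℝ (castR '' (V : Set (Fin k → ℤ))))
    (hfx : ∑ i, x i * (v i : ℝ) = m + t) :
    ∃ z ∈ convexHull ℝ (castR '' (V : Set (Fin k → ℤ))),
      (∑ i, z i * (v i : ℝ)) = m + 1 ∧ x = (1 - t) • pmin + t • z := by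
  classical
  set f := flin k v with hfdef
  set V' : Finset (Fin k → ℝ) := V.image castR with hV'
  have hVset : castR '' (V : Set (Fin k → ℤ)) = (V' : Set (Fin k → ℝ)) := by
    simp [hV', Finset.coe_image]
  have hpmin' : pmin ∈ V' := by rw [← Finset.mem_coe, ← hVset]; exact hpminV
  rw [hVset, Finset.convexHull_eq] at hx
  obtain ⟨w, hw0, hw1, hwx⟩ := hx
  have hstep : ∀ y ∈ V', y ≠ pmin → (m : ℝ) + 1 ≤ f y := by
    intro y hy hne
    obtain ⟨p, hp, rfl⟩ := Finset.mem_image.1 hy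
    set c : ℤ := ∑ i, p i * v i with hcdef
    have hc : (∑ i, (p i : ℝ) * (v i : ℝ)) = (c : ℝ) := by rw [hcdef]; push_cast; rfl
    have hmc : (m : ℝ) ≤ (c : ℝ) := by rw [← hc]; exact hlb p hp
    have hne' : c ≠ m := by
      intro h
      exact hne (huniq p hp (by rw [hc, h]))
    have hlt : m < c := lt_of_le_of_ne (by exact_mod_cast hmc) (Ne.symm hne')
    show (m : ℝ) + 1 ≤ ∑ i, (p i : ℝ) * (v i : ℝ)
    rw [hc]
    exact_mod_cast hlt
  have hfpmin' : f pmin = (m : ℝ) := hfpmin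
  have hxsum : x = ∑ y ∈ V', w y • y := by
    rw [← hwx, Finset.centerMass_eq_of_sum_1 _ id hw1]; rfl
  have hfsum : f x = ∑ y ∈ V', w y * f y := by
    rw [hxsum, map_sum]
    simp [smul_eq_mul]
  set α := w pmin with hα
  have h1 : ∑ y ∈ V'.erase pmin, w y = 1 - α := by
    rw [← hw1, ← Finset.add_sum_erase _ w hpmin']; ring
  have h2 : (1 - α) * ((m : ℝ) + 1) ≤ ∑ y ∈ V'.erase pmin, w y * f y := by
    rw [← h1, Finset.sum_mul]
    apply Finset.sum_le_sum
    intro y hy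
    obtain ⟨hne, hymem⟩ := Finset.mem_erase.1 hy
    exact mul_le_mul_of_nonneg_left (hstep y hymem hne) (hw0 y hymem)
  have hsplit : f x = α * (m : ℝ) + ∑ y ∈ V'.erase pmin, w y * f y := by
    rw [hfsum, ← Finset.add_sum_erase _ _ hpmin', hfpmin']
  have hfx' : f x = (m : ℝ) + t := hfx
  have key : 1 - α ≤ t := by nlinarith [hsplit, h2, hfx']
  set w' : (Fin k → ℝ) → ℝ := fun y => if y = pmin then (α - (1 - t)) / t else w y / t with hw'
  have hw'0 : ∀ y ∈ V', 0 ≤ w' y := by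
    intro y hy
    by_cases h : y = pmin
    · simp only [hw', h, if_pos rfl]
      exact div_nonneg (by linarith) ht0.le
    · simp only [hw', if_neg h]
      exact div_nonneg (hw0 y hy) ht0.le
  have hw'1 : ∑ y ∈ V', w' y = 1 := by
    rw [← Finset.add_sum_erase _ w' hpmin']
    have he : ∀ y ∈ V'.erase pmin, w' y = w y / t := by
      intro y hy
      simp only [hw', if_neg (Finset.mem_erase.1 hy).1]
    rw [Finset.sum_congr rfl he, ← Finset.sum_div, h1]
    simp only [hw', if_pos rfl]
    field_simp
    ring
  set z := V'.centerMass w' id with hz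
  have hzmem : z ∈ convexHull ℝ (castR '' (V : Set (Fin k → ℤ))) := by
    rw [hVset]
    exact Finset.centerMass_mem_convexHull _ hw'0 (by rw [hw'1]; exact one_pos)
      (fun i hi => Finset.mem_coe.2 hi)
  have hzsum : z = ∑ y ∈ V', w' y • y := by
    rw [hz, Finset.centerMass_eq_of_sum_1 _ id hw'1]; rfl
  have hxz : x = (1 - t) • pmin + t • z := by
    have e1 : x = α • pmin + ∑ y ∈ V'.erase pmin, w y • y := by
      rw [hxsum, ← Finset.add_sum_erase _ _ hpmin']
    have e2 : t • z = (α - (1 - t)) • pmin + ∑ y ∈ V'.erase pmin, w y • y := by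
      rw [hzsum, Finset.smul_sum, ← Finset.add_sum_erase _ _ hpmin']
      congr 1
      · rw [smul_smul]
        congr 1
        simp only [hw', if_pos rfl]
        field_simp
      · apply Finset.sum_congr rfl
        intro y hy
        rw [smul_smul]
        congr 1
        simp only [hw', if_neg (Finset.mem_erase.1 hy).1]
        field_simp
    rw [e2, e1]
    module
  have hfz : (∑ i, z i * (v i : ℝ)) = m + 1 := by
    have hfc : f x = (1 - t) * f pmin + t * f z := by
      rw [hxz]; simp [smul_eq_mul]
    rw [hfpmin', hfx'] at hfc
    have h3 : t * f z = t * ((m : ℝ) + 1) := by ring_nf; ring_nf at hfc; linarith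
    have h4 := mul_left_cancel₀ ht0.ne' h3
    rw [← flin_apply v, h4]
  exact ⟨z, hzmem, hfz, hxz⟩

open Pointwise in
/-- The hypotheses (1)–(3) of the non-semiampleness criterion are preserved by dilation:
for every `r ≥ 1`, the polytope `rΔ` satisfies `lw(rΔ) = lw_v(rΔ) = r·lw(Δ)` and the
conditions (1), (2) and (3) with respect to the same direction `v`. -/
theorem width_conditions_dilate (k : ℕ) (hk : 2 ≤ k)
    (V : Finset (Fin k → ℤ)) (Δ : Set (Fin k → ℝ))
    (hΔ : Δ = convexHull ℝ (castR '' (V : Set (Fin k → ℤ))))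
    (hfull : affineSpan ℝ Δ = ⊤)
    (v : Fin k → ℤ) (hprim : Finset.univ.gcd v = 1)
    (hlw : lw k Δ = lwv k Δ v)
    (pmin pmax : Fin k → ℝ)
    (hmin : {x ∈ Δ | ∑ i, x i * (v i : ℝ) = minv k Δ v} = {pmin})
    (hmax : {x ∈ Δ | ∑ i, x i * (v i : ℝ) = maxv k Δ v} = {pmax})
    (hdim : Module.finrank ℝ (Lambda k Δ v).direction ≤ k - 2)
    (hline : (affineSpan ℝ {pmin, pmax} : Set (Fin k → ℝ)) ∩
      (Lambda k Δ v : Set (Fin k → ℝ)) = ∅) :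
    ∀ r : ℕ, 0 < r →
      lw k (dil k r Δ) = lwv k (dil k r Δ) v ∧
      lwv k (dil k r Δ) v = (r : ℝ) * lw k Δ ∧
      {x ∈ dil k r Δ | ∑ i, x i * (v i : ℝ) = minv k (dil k r Δ) v} = {(r : ℝ) • pmin} ∧
      {x ∈ dil k r Δ | ∑ i, x i * (v i : ℝ) = maxv k (dil k r Δ) v} = {(r : ℝ) • pmax} ∧
      Module.finrank ℝ (Lambda k (dil k r Δ) v).direction ≤ k - 2 ∧
      (affineSpan ℝ {(r : ℝ) • pmin, (r : ℝ) • pmax} : Set (Fin k → ℝ)) ∩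
        (Lambda k (dil k r Δ) v : Set (Fin k → ℝ)) = ∅ := by
  intro r hr
  have hrR : (0 : ℝ) < (r : ℝ) := by exact_mod_cast hr
  have hrR1 : (1 : ℝ) ≤ (r : ℝ) := by exact_mod_cast hr
  -- pointwise scaling of the level function
  have hsmulsum : ∀ (c : ℝ) (y : Fin k → ℝ),
      (∑ i, (c • y) i * (v i : ℝ)) = c * ∑ i, y i * (v i : ℝ) := by
    intro c y
    simp [Finset.mul_sum, mul_assoc]
  -- basic facts about pmin, pmax
  have hpmin : pmin ∈ Δ ∧ ∑ i, pmin i * (v i : ℝ) = minv k Δ v := by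
    have h : pmin ∈ ({pmin} : Set (Fin k → ℝ)) := rfl
    rw [← hmin] at h; exact h
  have hpmax : pmax ∈ Δ ∧ ∑ i, pmax i * (v i : ℝ) = maxv k Δ v := by
    have h : pmax ∈ ({pmax} : Set (Fin k → ℝ)) := rfl
    rw [← hmax] at h; exact h
  have hVne : V.Nonempty := by
    rcases V.eq_empty_or_nonempty with h | h
    · exfalso
      have := hpmin.1
      rw [hΔ, h] at this
      simp at this
    · exact h
  -- images under level functions are intervals
  have himg : ∀ u : Fin k → ℤ, (fun x : Fin k → ℝ => ∑ i, x i * (u i : ℝ)) '' Δ =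
      Set.Icc ((V.image fun p => ∑ i, (p i : ℝ) * (u i : ℝ)).min' (hVne.image _))
              ((V.image fun p => ∑ i, (p i : ℝ) * (u i : ℝ)).max' (hVne.image _)) := by
    intro u; rw [hΔ]; exact image_hull_eq_Icc V hVne u
  have hminmax : ∀ u : Fin k → ℤ,
      minv k Δ u = (V.image fun p => ∑ i, (p i : ℝ) * (u i : ℝ)).min' (hVne.image _) ∧
      maxv k Δ u = (V.image fun p => ∑ i, (p i : ℝ) * (u i : ℝ)).max' (hVne.image _) := by
    intro u
    have hle : (V.image fun p => ∑ i, (p i : ℝ) * (u i : ℝ)).min' (hVne.image _) ≤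
        (V.image fun p => ∑ i, (p i : ℝ) * (u i : ℝ)).max' (hVne.image _) :=
      Finset.min'_le _ _ (Finset.max'_mem _ _)
    constructor
    · rw [minv, himg u, csInf_Icc hle]
    · rw [maxv, himg u, csSup_Icc hle]
  -- scaling
  have himgdil : ∀ u : Fin k → ℤ, (fun x : Fin k → ℝ => ∑ i, x i * (u i : ℝ)) '' (dil k r Δ) =
      (r : ℝ) • ((fun x : Fin k → ℝ => ∑ i, x i * (u i : ℝ)) '' Δ) := by
    intro u
    rw [dil_def, Set.image_image, ← Set.image_smul, Set.image_image]
    apply Set.image_congr'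
    intro x
    simp [smul_eq_mul, Finset.mul_sum, mul_assoc]
  have hminvdil : ∀ u : Fin k → ℤ, minv k (dil k r Δ) u = (r : ℝ) * minv k Δ u := by
    intro u
    rw [minv, himgdil u, Real.sInf_smul_of_nonneg hrR.le, smul_eq_mul, minv]
  have hmaxvdil : ∀ u : Fin k → ℤ, maxv k (dil k r Δ) u = (r : ℝ) * maxv k Δ u := by
    intro u
    rw [maxv, himgdil u, Real.sSup_smul_of_nonneg hrR.le, smul_eq_mul, maxv]
  have hlwvdil : ∀ u : Fin k → ℤ, lwv k (dil k r Δ) u = (r : ℝ) * lwv k Δ u := by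
    intro u
    rw [lwv, lwv, hminvdil u, hmaxvdil u]; ring
  have hTset : {w : ℝ | ∃ u : Fin k → ℤ, u ≠ 0 ∧ w = lwv k (dil k r Δ) u}
      = (r : ℝ) • {w : ℝ | ∃ u : Fin k → ℤ, u ≠ 0 ∧ w = lwv k Δ u} := by
    ext w
    simp only [Set.mem_smul_set, Set.mem_setOf_eq]
    constructor
    · rintro ⟨u, hu, rfl⟩
      exact ⟨lwv k Δ u, ⟨u, hu, rfl⟩, by rw [smul_eq_mul, hlwvdil u]⟩
    · rintro ⟨w', ⟨u, hu, rfl⟩, rfl⟩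
      exact ⟨u, hu, by rw [smul_eq_mul, hlwvdil u]⟩
  have hlwdil : lw k (dil k r Δ) = (r : ℝ) * lw k Δ := by
    rw [lw, hTset, Real.sInf_smul_of_nonneg hrR.le, smul_eq_mul, lw]
  -- lattice vertex attaining the minimum
  obtain ⟨p₀, hp₀V, hp₀⟩ : ∃ p ∈ V, (∑ i, (p i : ℝ) * (v i : ℝ)) = minv k Δ v := by
    have h := (V.image fun p => ∑ i, (p i : ℝ) * (v i : ℝ)).min'_mem (hVne.image _)
    rw [Finset.mem_image] at h
    obtain ⟨p, hp, hval⟩ := h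
    exact ⟨p, hp, by rw [(hminmax v).1]; exact hval⟩
  have hp₀Δ : castR p₀ ∈ Δ := by
    rw [hΔ]; exact subset_convexHull ℝ _ ⟨p₀, Finset.mem_coe.2 hp₀V, rfl⟩
  have hp₀pmin : castR p₀ = pmin := by
    have h : castR p₀ ∈ {x ∈ Δ | ∑ i, x i * (v i : ℝ) = minv k Δ v} := ⟨hp₀Δ, hp₀⟩
    rw [hmin] at h; exact h
  set mz : ℤ := ∑ i, p₀ i * v i with hmzdef
  have hmcast : minv k Δ v = (mz : ℝ) := by
    rw [← hp₀, hmzdef]; push_cast; rfl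
  have hlb : ∀ p ∈ V, (mz : ℝ) ≤ ∑ i, (p i : ℝ) * (v i : ℝ) := by
    intro p hp
    rw [← hmcast, (hminmax v).1]
    exact Finset.min'_le _ _ (Finset.mem_image_of_mem _ hp)
  have huniq : ∀ p ∈ V, (∑ i, (p i : ℝ) * (v i : ℝ)) = mz → castR p = pmin := by
    intro p hp hpv
    have h : castR p ∈ {x ∈ Δ | ∑ i, x i * (v i : ℝ) = minv k Δ v} := by
      refine ⟨by rw [hΔ]; exact subset_convexHull ℝ _ ⟨p, Finset.mem_coe.2 hp, rfl⟩, ?_⟩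
      show (∑ i, (p i : ℝ) * (v i : ℝ)) = minv k Δ v
      rw [hpv, hmcast]
    rw [hmin] at h; exact h
  have hfpminv : ∑ i, pmin i * (v i : ℝ) = (mz : ℝ) := by rw [hpmin.2, hmcast]
  have hpminV : pmin ∈ castR '' (V : Set (Fin k → ℤ)) := ⟨p₀, Finset.mem_coe.2 hp₀V, hp₀pmin⟩
  have hminvdilv : minv k (dil k r Δ) v = (r : ℝ) * (mz : ℝ) := by
    rw [hminvdil v, hmcast]
  have hcastshift : ∀ p : Fin k → ℤ,
      castR (((r : ℤ) - 1) • p₀ + p) = ((r : ℝ) - 1) • pmin + castR p := by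
    intro p; funext i
    have hpm_i : (p₀ i : ℝ) = pmin i := congrFun hp₀pmin i
    show ((((r : ℤ) - 1) • p₀ + p) i : ℝ) = (((r : ℝ) - 1) • pmin + castR p) i
    simp only [Pi.add_apply, Pi.smul_apply, smul_eq_mul, castR]
    push_cast
    rw [hpm_i]
  have hSeq : {p : Fin k → ℤ | castR p ∈ dil k r Δ ∧
        ∑ i, (p i : ℝ) * (v i : ℝ) = minv k (dil k r Δ) v + 1}
      = (fun p => ((r : ℤ) - 1) • p₀ + p) ''
        {p : Fin k → ℤ | castR p ∈ Δ ∧ ∑ i, (p i : ℝ) * (v i : ℝ) = minv k Δ v + 1} := by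
    ext q
    simp only [Set.mem_setOf_eq, Set.mem_image]
    constructor
    · rintro ⟨hqd, hqv⟩
      obtain ⟨x, hxΔ, hxq⟩ := hqd
      have hxq' : (r : ℝ) • x = castR q := hxq
      have hfx : ∑ i, x i * (v i : ℝ) = (mz : ℝ) + 1 / r := by
        apply mul_left_cancel₀ hrR.ne'
        have h5 : (∑ i, ((r : ℝ) • x) i * (v i : ℝ)) = (r : ℝ) * (mz : ℝ) + 1 := by
          rw [hxq']
          show (∑ i, (q i : ℝ) * (v i : ℝ)) = _
          rw [hqv, hminvdilv]
        rw [← hsmulsum, h5]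
        field_simp
      obtain ⟨z, hz, hfz, hxz⟩ := slab_lemma V v mz pmin hpminV hfpminv hlb huniq
        (t := 1 / r) (by positivity) (by rw [← hΔ]; exact hxΔ) hfx
      have hzeq : castR (q - ((r : ℤ) - 1) • p₀) = z := by
        funext i
        have h1 : (r : ℝ) * x i = (q i : ℝ) := congrFun hxq' i
        have h2 : x i = (1 - 1 / r) * pmin i + (1 / r) * z i := congrFun hxz i
        have hpm_i : (p₀ i : ℝ) = pmin i := congrFun hp₀pmin i
        show ((q i - ((r : ℤ) - 1) * p₀ i : ℤ) : ℝ) = z i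
        push_cast
        rw [← h1, h2, ← hpm_i]
        field_simp
        ring
      refine ⟨q - ((r : ℤ) - 1) • p₀, ⟨?_, ?_⟩, ?_⟩
      · rw [hΔ, hzeq]; exact hz
      · show (∑ i, (castR (q - ((r : ℤ) - 1) • p₀)) i * (v i : ℝ)) = minv k Δ v + 1
        rw [hzeq, hmcast]
        exact hfz
      · abel
    · rintro ⟨p, ⟨hpΔ, hpv⟩, rfl⟩
      have hpvz : (∑ i, (castR p) i * (v i : ℝ)) = (mz : ℝ) + 1 := by
        show (∑ i, (p i : ℝ) * (v i : ℝ)) = _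
        rw [hpv, hmcast]
      constructor
      · refine ⟨((1 : ℝ) - 1 / (r : ℝ)) • pmin + ((1 : ℝ) / (r : ℝ)) • castR p, ?_, ?_⟩
        · rw [hΔ]
          have h1 : pmin ∈ convexHull ℝ (castR '' (V : Set (Fin k → ℤ))) := by
            rw [← hΔ]; exact hpmin.1
          have h2 : castR p ∈ convexHull ℝ (castR '' (V : Set (Fin k → ℤ))) := by
            rw [← hΔ]; exact hpΔ
          refine (convex_convexHull ℝ _) h1 h2 ?_ (by positivity) (by ring)
          rw [sub_nonneg, div_le_one hrR]
          exact hrR1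
        · rw [hcastshift p]
          funext i
          simp only [Pi.add_apply, Pi.smul_apply, smul_eq_mul]
          field_simp
      · show (∑ i, (castR (((r : ℤ) - 1) • p₀ + p)) i * (v i : ℝ)) = minv k (dil k r Δ) v + 1
        rw [hcastshift p]
        have e : ∑ i, ((((r : ℝ) - 1) • pmin + castR p) i) * (v i : ℝ)
            = ((r : ℝ) - 1) * (∑ i, pmin i * (v i : ℝ)) + ∑ i, (castR p) i * (v i : ℝ) := by
          simp only [Pi.add_apply, Pi.smul_apply, smul_eq_mul, add_mul, Finset.sum_add_distrib,
            Finset.mul_sum, mul_assoc]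
        rw [e, hfpminv, hpvz, hminvdilv]
        ring
  have hLdil : Lambda k (dil k r Δ) v =
      (Lambda k Δ v).map ((AffineEquiv.constVAdd ℝ (Fin k → ℝ)
        (((r : ℝ) - 1) • pmin)).toAffineMap) := by
    unfold Lambda
    rw [hSeq, AffineSubspace.map_span]
    congr 1
    rw [Set.image_image, Set.image_image]
    apply Set.image_congr'
    intro p
    rw [hcastshift p]
    simp [vadd_eq_add]
  refine ⟨?_, ?_, ?_, ?_, ?_, ?_⟩
  · rw [hlwdil, hlw, hlwvdil v]
  · rw [hlwvdil v, hlw]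
  · -- min slice
    ext x
    simp only [Set.mem_sep_iff, Set.mem_singleton_iff]
    constructor
    · rintro ⟨hxd, hxf⟩
      obtain ⟨y, hy, rfl⟩ := hxd
      have hyf : ∑ i, y i * (v i : ℝ) = minv k Δ v := by
        apply mul_left_cancel₀ hrR.ne'
        rw [← hsmulsum, hxf, hminvdil v]
      have hy' : y ∈ {x ∈ Δ | ∑ i, x i * (v i : ℝ) = minv k Δ v} := ⟨hy, hyf⟩
      rw [hmin] at hy'
      rw [hy']
    · rintro rfl
      exact ⟨⟨pmin, hpmin.1, rfl⟩, by rw [hsmulsum, hpmin.2, hminvdil v]⟩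
  · -- max slice
    ext x
    simp only [Set.mem_sep_iff, Set.mem_singleton_iff]
    constructor
    · rintro ⟨hxd, hxf⟩
      obtain ⟨y, hy, rfl⟩ := hxd
      have hyf : ∑ i, y i * (v i : ℝ) = maxv k Δ v := by
        apply mul_left_cancel₀ hrR.ne'
        rw [← hsmulsum, hxf, hmaxvdil v]
      have hy' : y ∈ {x ∈ Δ | ∑ i, x i * (v i : ℝ) = maxv k Δ v} := ⟨hy, hyf⟩
      rw [hmax] at hy'
      rw [hy']
    · rintro rfl
      exact ⟨⟨pmax, hpmax.1, rfl⟩, by rw [hsmulsum, hpmax.2, hmaxvdil v]⟩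
  · -- dimension of Λ is preserved
    have hdir : (Lambda k (dil k r Δ) v).direction = (Lambda k Δ v).direction := by
      rw [hLdil, AffineSubspace.map_direction]
      simp
    rw [hdir]
    exact hdim
  · -- the line misses Λ
    rw [Set.eq_empty_iff_forall_notMem]
    rintro x ⟨hx1, hx2⟩
    rw [hLdil] at hx2
    rw [AffineSubspace.coe_map] at hx2
    obtain ⟨y, hyΛ, hyx⟩ := hx2
    have hyx' : ((r : ℝ) - 1) • pmin + y = x := hyx
    have hx1' : (x - (r : ℝ) • pmin) +ᵥ ((r : ℝ) • pmin) ∈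
        line[ℝ, (r : ℝ) • pmin, (r : ℝ) • pmax] := by
      rw [vadd_eq_add, sub_add_cancel]
      exact hx1
    obtain ⟨s, hs⟩ := vadd_left_mem_affineSpan_pair.1 hx1'
    rw [vsub_eq_sub] at hs
    have hy : y = (s * (r : ℝ)) • (pmax - pmin) + pmin := by
      have hxe : x = s • ((r : ℝ) • pmax - (r : ℝ) • pmin) + (r : ℝ) • pmin := by
        rw [hs]; abel
      rw [← hyx'] at hxe
      funext i
      have h := congrFun hxe i
      simp only [Pi.add_apply, Pi.sub_apply, Pi.smul_apply, smul_eq_mul] at h ⊢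
      linear_combination h
    have hymem : y ∈ line[ℝ, pmin, pmax] := by
      have := smul_vsub_vadd_mem_affineSpan_pair (s * (r : ℝ)) pmin pmax
      rw [vsub_eq_sub, vadd_eq_add] at this
      rw [hy]
      exact this
    rw [Set.eq_empty_iff_forall_notMem] at hline
    exact hline y ⟨hymem, hyΛ⟩
end
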